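/- Let ℓ₁, ℓ₂ > 0 be real, α ∈ ℝ, and k ∈ ℂ with k ≠ 0. There exists a nonzero tuple (a₁, b₂, c₁, c₂) ∈ ℂ⁴ satisfying the linear system: a₁·sin(kℓ₁) = c₁, b₂·((α/k)·sin(kℓ₂) + cos(kℓ₂)) = c₁, c₁ = c₂, and −a₁·k·cos(kℓ₁) − b₂·(α·cos(kℓ₂) − k·sin(kℓ₂)) + ik·(c₁ + c₂) = 0, if and only if k·cos(kℓ₁)·cos(kℓ₂) + (α − 2ik)·sin(kℓ₁)·cos(kℓ₂) + α·cos(kℓ₁)·sin(kℓ₂) − (2iα + k)·sin(kℓ₁)·sin(kℓ₂) = 0. -/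

import Mathlib

open Complex

/-- Resonance condition for the cross-shaped resonator: one central vertex with two
internal edges (Dirichlet end on the first, Robin end `f' = αf` on the second) and two
leads attached with standard coupling. A nontrivial solution of the coupling equations
exists iff `k cos kℓ₁ cos kℓ₂ + (α-2ik) sin kℓ₁ cos kℓ₂ + α cos kℓ₁ sin kℓ₂
- (2iα+k) sin kℓ₁ sin kℓ₂ = 0`. -/
theorem stmt_13 (ℓ₁ ℓ₂ : ℝ) (hℓ₁ : 0 < ℓ₁) (hℓ₂ : 0 < ℓ₂) (α : ℝ) (k : ℂ)
    (hk : k ≠ 0) :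
    (∃ a₁ b₂ c₁ c₂ : ℂ,
      (a₁, b₂, c₁, c₂) ≠ (0, 0, 0, 0) ∧
      a₁ * Complex.sin (k * ℓ₁) = c₁ ∧
      b₂ * ((α / k) * Complex.sin (k * ℓ₂) + Complex.cos (k * ℓ₂)) = c₁ ∧
      c₁ = c₂ ∧
      -(a₁ * k * Complex.cos (k * ℓ₁))
        - b₂ * ((α : ℂ) * Complex.cos (k * ℓ₂) - k * Complex.sin (k * ℓ₂))
        + Complex.I * k * (c₁ + c₂) = 0)
    ↔ k * Complex.cos (k * ℓ₁) * Complex.cos (k * ℓ₂)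
      + ((α : ℂ) - 2 * Complex.I * k) * Complex.sin (k * ℓ₁) * Complex.cos (k * ℓ₂)
      + (α : ℂ) * Complex.cos (k * ℓ₁) * Complex.sin (k * ℓ₂)
      - (2 * Complex.I * (α : ℂ) + k) * Complex.sin (k * ℓ₁) * Complex.sin (k * ℓ₂)
        = 0 := by
  set s1 := Complex.sin (k * ℓ₁) with hs1
  set c1 := Complex.cos (k * ℓ₁) with hc1
  set s2 := Complex.sin (k * ℓ₂) with hs2
  set c2 := Complex.cos (k * ℓ₂) with hc2
  have pyth1 : s1 ^ 2 + c1 ^ 2 = 1 := Complex.sin_sq_add_cos_sq _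
  have pyth2 : s2 ^ 2 + c2 ^ 2 = 1 := Complex.sin_sq_add_cos_sq _
  constructor
  · rintro ⟨a₁, b₂, cc₁, cc₂, hne, h1, h2, h3, h4⟩
    subst h3
    subst h1
    have h2k : b₂ * ((α : ℂ) * s2 + k * c2) = k * (a₁ * s1) := by
      have := congrArg (fun z => k * z) h2
      field_simp at this
      linear_combination this
    by_cases ha : a₁ = 0
    · subst ha
      simp only [zero_mul, mul_zero] at h2k h4 hne
      have hb : b₂ ≠ 0 := by
        intro hb; apply hne; simp [hb]
      have hB : (α : ℂ) * s2 + k * c2 = 0 := by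
        rcases mul_eq_zero.mp h2k with h | h
        · exact absurd h hb
        · exact h
      have hR : (α : ℂ) * c2 - k * s2 = 0 := by
        have : b₂ * ((α : ℂ) * c2 - k * s2) = 0 := by linear_combination -h4
        rcases mul_eq_zero.mp this with h | h
        · exact absurd h hb
        · exact h
      have : k = 0 := by
        linear_combination c2 * hB - s2 * hR - k * pyth2
      exact absurd this hk
    · by_cases hb : b₂ = 0
      · subst hb
        simp only [zero_mul] at h2k h4
        have hA : s1 = 0 := by
          rcases mul_eq_zero.mp h2k.symm with h | h
          · exact absurd h hk
          · rcases mul_eq_zero.mp h with h' | h'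
            · exact absurd h' ha
            · exact h'
        have hC : c1 = 0 := by
          have : a₁ * (k * c1) = 0 := by linear_combination -h4 + 2 * Complex.I * k * a₁ * hA
          rcases mul_eq_zero.mp this with h | h
          · exact absurd h ha
          rcases mul_eq_zero.mp h with h | h
          · exact absurd h hk
          · exact h
        have : (0:ℂ) = 1 := by rw [← pyth1, hA, hC]; ring
        exact absurd this (by norm_num)
      · have key : a₁ * b₂ * k *
            (k * c1 * c2 + ((α : ℂ) - 2 * Complex.I * k) * s1 * c2
              + (α : ℂ) * c1 * s2 - (2 * Complex.I * (α : ℂ) + k) * s1 * s2) = 0 := by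
          linear_combination (a₁ * (k * c1 - 2 * Complex.I * k * s1)) * h2k
            + (-(k * a₁ * s1)) * h4
        rcases mul_eq_zero.mp key with h | h
        · rcases mul_eq_zero.mp h with h' | h'
          · rcases mul_eq_zero.mp h' with h'' | h''
            · exact absurd h'' ha
            · exact absurd h'' hb
          · exact absurd h' hk
        · exact h
  · intro hD
    by_cases hA : s1 = 0
    · have hc1 : c1 ≠ 0 := by
        intro h
        have : (0:ℂ) = 1 := by rw [← pyth1, hA, h]; ring
        exact absurd this (by norm_num)
      have hB : (α : ℂ) * s2 + k * c2 = 0 := by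
        have h' : c1 * ((α : ℂ) * s2 + k * c2) = 0 := by
          linear_combination hD - (((α:ℂ) - 2*Complex.I*k) * c2 - (2*Complex.I*(α:ℂ)+k)*s2) * hA
        rcases mul_eq_zero.mp h' with h | h
        · exact absurd h hc1
        · exact h
      refine ⟨(α : ℂ) * c2 - k * s2, -(k * c1), 0, 0, ?_, ?_, ?_, rfl, ?_⟩
      · intro h
        have h2 := congrArg (fun p => p.2.1) h
        simp only [Prod.snd, Prod.fst] at h2
        exact (mul_ne_zero hk hc1) (by simpa [neg_eq_zero] using h2)
      · rw [hA]; ring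
      · have : (α : ℂ) / k * s2 + c2 = 0 := by
          field_simp
          linear_combination hB
        rw [this]; ring
      · ring
    · refine ⟨(α : ℂ) * s2 + k * c2, k * s1,
        s1 * ((α : ℂ) * s2 + k * c2), s1 * ((α : ℂ) * s2 + k * c2), ?_, ?_, ?_, rfl, ?_⟩
      · intro h
        have h2 := congrArg (fun p => p.2.1) h
        simp only at h2
        exact (mul_ne_zero hk hA) h2
      · ring
      · field_simp
      · linear_combination (-k) * hD
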